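/- For a disjunctive semi-symbolic node with I inputs, weights w ∈ {−6,0,6}^I with at least one nonzero weight, bias β = Σ_i |w_i| − max_i |w_i|, and input x ∈ {−1,1}^I, the raw output g(x) = Σ_i w_i x_i + β is either equal to −6 or at least 6; in particular it is never 0. -/

import Mathlib

theorem disj_node_output_neg_six_or_ge_six {I : ℕ} (w x : Fin I → ℝ)
    (hw : ∀ i, w i = -6 ∨ w i = 0 ∨ w i = 6)
    (i₀ : Fin I) (hi₀ : w i₀ ≠ 0)
    (hx : ∀ i, x i = -1 ∨ x i = 1) :
    (∑ i, w i * x i) +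
        ((∑ i, |w i|) - Finset.univ.sup' ⟨i₀, Finset.mem_univ i₀⟩ (fun i => |w i|)) = -6 ∨
      6 ≤ (∑ i, w i * x i) +
        ((∑ i, |w i|) - Finset.univ.sup' ⟨i₀, Finset.mem_univ i₀⟩ (fun i => |w i|)) := by
  have hw0 : w i₀ = -6 ∨ w i₀ = 6 := by rcases hw i₀ with h | h | h <;> tauto
  have hsup : Finset.univ.sup' ⟨i₀, Finset.mem_univ i₀⟩ (fun i => |w i|) = 6 := by
    apply le_antisymm
    · apply Finset.sup'_le
      intro i _
      rcases hw i with h | h | h <;> rw [h] <;> norm_num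
    · have : |w i₀| = 6 := by rcases hw0 with h | h <;> rw [h] <;> norm_num
      calc (6:ℝ) = |w i₀| := this.symm
        _ ≤ _ := Finset.le_sup' (f := fun i => |w i|) (Finset.mem_univ i₀)
  have hterm : ∀ i, w i * x i + |w i| = 0 ∨ w i * x i + |w i| = 12 := by
    intro i
    rcases hw i with h | h | h <;> rcases hx i with h' | h' <;> rw [h, h'] <;> norm_num
  have hsum : (∑ i, w i * x i) + (∑ i, |w i|) = ∑ i, (w i * x i + |w i|) := by
    rw [Finset.sum_add_distrib]
  rw [hsup]
  by_cases hall : ∀ i, w i * x i + |w i| = 0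
  · left
    have : (∑ i, (w i * x i + |w i|)) = 0 := Finset.sum_eq_zero (fun i _ => hall i)
    linarith [hsum, this]
  · right
    push_neg at hall
    obtain ⟨j, hj⟩ := hall
    have hj12 : w j * x j + |w j| = 12 := by rcases hterm j with h | h <;> tauto
    have hge : (12:ℝ) ≤ ∑ i, (w i * x i + |w i|) := by
      calc (12:ℝ) = w j * x j + |w j| := hj12.symm
        _ ≤ _ := Finset.single_le_sum (f := fun i => w i * x i + |w i|)
            (fun i _ => by rcases hterm i with h | h <;> rw [h] <;> norm_num)
            (Finset.mem_univ j)
    linarith [hsum]
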